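/- Let C be a fusion category over k and let (M,⊗,a) be a k-linear abelian semisimple left module category over C. Let M be an object of M and A = Hom̲(M,M) its internal End algebra in C. Then for any right A-module (U,q) in C and any object V of M, there is an isomorphism ζ_{U,V} : Hom_M(U ⊗_A M, V) → Hom_A(U, Hom̲(M,V)) which is natural in both U and V. -/

import Mathlib

open CategoryTheory MonoidalCategory CategoryTheory.Limits

universe v₁ u₁ v₂ u₂

/-- A (left) module category structure of a monoidal category `C` on a category `M`:
an action bifunctor together with associativity and unit isomorphisms satisfying
naturality, the pentagon and the triangle axioms. -/
structure CModuleStr (C : Type u₁) [Category.{v₁} C] [MonoidalCategory C]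
    (M : Type u₂) [Category.{v₂} M] where
  act : C ⥤ M ⥤ M
  assocIso : ∀ (X Y : C) (m : M),
    (act.obj (X ⊗ Y)).obj m ≅ (act.obj X).obj ((act.obj Y).obj m)
  unitIso : ∀ m : M, (act.obj (𝟙_ C)).obj m ≅ m
  assoc_natural_left : ∀ {X X' : C} (f : X ⟶ X') (Y : C) (m : M),
    (act.map (f ▷ Y)).app m ≫ (assocIso X' Y m).hom
      = (assocIso X Y m).hom ≫ ((act.map f).app ((act.obj Y).obj m))
  assoc_natural_mid : ∀ (X : C) {Y Y' : C} (g : Y ⟶ Y') (m : M),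
    (act.map (X ◁ g)).app m ≫ (assocIso X Y' m).hom
      = (assocIso X Y m).hom ≫ (act.obj X).map ((act.map g).app m)
  assoc_natural_right : ∀ (X Y : C) {m m' : M} (h : m ⟶ m'),
    (act.obj (X ⊗ Y)).map h ≫ (assocIso X Y m').hom
      = (assocIso X Y m).hom ≫ (act.obj X).map ((act.obj Y).map h)
  unit_natural : ∀ {m m' : M} (h : m ⟶ m'),
    (act.obj (𝟙_ C)).map h ≫ (unitIso m').hom = (unitIso m).hom ≫ h
  pentagon : ∀ (X Y Z : C) (m : M),
    (act.map (α_ X Y Z).hom).app m ≫ (assocIso X (Y ⊗ Z) m).hom ≫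
        (act.obj X).map (assocIso Y Z m).hom
      = (assocIso (X ⊗ Y) Z m).hom ≫ (assocIso X Y ((act.obj Z).obj m)).hom
  triangle : ∀ (X : C) (m : M),
    (act.map (ρ_ X).hom).app m
      = (assocIso X (𝟙_ C) m).hom ≫ (act.obj X).map (unitIso m).hom

variable {C : Type u₁} [Category.{v₁} C] [MonoidalCategory C]
  {M : Type u₂} [Category.{v₂} M]

/-- An internal-Hom datum for a pair of objects `M₁, M₂` of a module category:
an object of `C` representing `X ↦ Hom_M(X ⊗ M₁, M₂)`. -/
structure IHom (Φ : CModuleStr C M) (M₁ M₂ : M) where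
  obj : C
  η : ∀ X : C, ((Φ.act.obj X).obj M₁ ⟶ M₂) ≃ (X ⟶ obj)
  naturality : ∀ {X X' : C} (f : X ⟶ X') (g : (Φ.act.obj X').obj M₁ ⟶ M₂),
    η X ((Φ.act.map f).app M₁ ≫ g) = f ≫ η X' g

/-- The evaluation morphism `Hom̲(M₁,M₂) ⊗ M₁ ⟶ M₂`. -/
noncomputable def IHom.ev {Φ : CModuleStr C M} {M₁ M₂ : M} (ih : IHom Φ M₁ M₂) :
    (Φ.act.obj ih.obj).obj M₁ ⟶ M₂ :=
  (ih.η ih.obj).symm (𝟙 ih.obj)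

/-- The multiplication of the internal-End algebra `A = Hom̲(M,M)`. -/
noncomputable def IHom.mul {Φ : CModuleStr C M} {m : M} (ih : IHom Φ m m) :
    ih.obj ⊗ ih.obj ⟶ ih.obj :=
  ih.η (ih.obj ⊗ ih.obj)
    ((Φ.assocIso ih.obj ih.obj m).hom ≫ (Φ.act.obj ih.obj).map ih.ev ≫ ih.ev)

/-- The unit of the internal-End algebra `A = Hom̲(M,M)`. -/
noncomputable def IHom.unit {Φ : CModuleStr C M} {m : M} (ih : IHom Φ m m) :
    𝟙_ C ⟶ ih.obj :=
  ih.η (𝟙_ C) (Φ.unitIso m).hom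

/-- The right `A = Hom̲(M,M)`-action `μ_{M,M,V}` on the internal Hom `Hom̲(M,V)`. -/
noncomputable def IHom.rAct {Φ : CModuleStr C M} {m V : M} (ihM : IHom Φ m m)
    (ihV : IHom Φ m V) : ihV.obj ⊗ ihM.obj ⟶ ihV.obj :=
  ihV.η (ihV.obj ⊗ ihM.obj)
    ((Φ.assocIso ihV.obj ihM.obj m).hom ≫ (Φ.act.obj ihV.obj).map ihM.ev ≫ ihV.ev)

/-- `(U, q)` is a right module in `C` over the internal-End algebra `A = Hom̲(M,M)`. -/
def IsRightModule {Φ : CModuleStr C M} {m : M} (ihM : IHom Φ m m)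
    (U : C) (q : U ⊗ ihM.obj ⟶ U) : Prop :=
  ((U ◁ ihM.unit) ≫ q = (ρ_ U).hom) ∧
  ((U ◁ ihM.mul) ≫ q = (α_ U ihM.obj ihM.obj).inv ≫ (q ▷ ihM.obj) ≫ q)

/-- A morphism of right `A`-modules in `C`. -/
def IsRightModuleHom {Φ : CModuleStr C M} {m : M} (ihM : IHom Φ m m)
    {U U' : C} (q : U ⊗ ihM.obj ⟶ U) (q' : U' ⊗ ihM.obj ⟶ U') (φ : U ⟶ U') : Prop :=
  q ≫ φ = (φ ▷ ihM.obj) ≫ q'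

/-- The pair of morphisms `(U ⊗ A) ⊗ M ⇉ U ⊗ M` whose coequalizer is `U ⊗_A M`. -/
noncomputable def tensorPairLeft {Φ : CModuleStr C M} {m : M} (ihM : IHom Φ m m)
    (U : C) (q : U ⊗ ihM.obj ⟶ U) :
    (Φ.act.obj (U ⊗ ihM.obj)).obj m ⟶ (Φ.act.obj U).obj m :=
  (Φ.act.map q).app m

/-- The second of the two morphisms `(U ⊗ A) ⊗ M ⇉ U ⊗ M`, namely
`(id_U ⊗ ev) ∘ a_{U,A,M}`. -/
noncomputable def tensorPairRight {Φ : CModuleStr C M} {m : M} (ihM : IHom Φ m m)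
    (U : C) : (Φ.act.obj (U ⊗ ihM.obj)).obj m ⟶ (Φ.act.obj U).obj m :=
  (Φ.assocIso U ihM.obj m).hom ≫ (Φ.act.obj U).map ihM.ev

/-- Every object is a finite biproduct of simple objects. -/
def AllSemisimple (E : Type*) [Category E] [Preadditive E] [HasFiniteBiproducts E] : Prop :=
  ∀ X : E, ∃ (n : ℕ) (f : Fin n → E), (∀ i, Simple (f i)) ∧ Nonempty (X ≅ ⨁ f)

/-- Let `C` be a fusion category over `k` and `M` a `k`-linear abelian
semisimple module category over `C`.  Let `M₀ ∈ M`, `A = Hom̲(M₀,M₀)` its internal End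
algebra.  For every right `A`-module `(U,q)` in `C` and every `V ∈ M` the canonical map
`ζ : Hom_M(U ⊗_A M₀, V) → Hom_A(U, Hom̲(M₀,V))`, `x ↦ η(π ≫ x)`, is a bijection onto
the `A`-module morphisms, natural in `U` and `V` (where `U ⊗_A M₀` is the coequalizer
of `q ⊗ id` and `(id ⊗ ev) ∘ a_{U,A,M₀}`). -/
theorem internal_hom_tensor_adjunction
    (k : Type*) [Field k]
    [Abelian C] [HasFiniteBiproducts C] [Linear k C] [MonoidalPreadditive C] [RigidCategory C]
    (hCss : AllSemisimple C) (hCunit : Simple (𝟙_ C))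
    (hCfin : ∃ (n : ℕ) (S : Fin n → C), ∀ X : C, Simple X → ∃ i, Nonempty (X ≅ S i))
    (hChom : ∀ X Y : C, FiniteDimensional k (X ⟶ Y))
    [Abelian M] [HasFiniteBiproducts M] [Linear k M] (hMss : AllSemisimple M)
    (Φ : CModuleStr C M) (m : M) (ihM : IHom Φ m m)
    (U : C) (q : U ⊗ ihM.obj ⟶ U) (hU : IsRightModule ihM U q)
    (V : M) (ihV : IHom Φ m V) :
    -- (a) `ζ x` is a morphism of right `A`-modules
    (∀ x : coequalizer (tensorPairLeft ihM U q) (tensorPairRight ihM U) ⟶ V,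
      IsRightModuleHom ihM q (ihM.rAct ihV)
        (ihV.η U (coequalizer.π (tensorPairLeft ihM U q) (tensorPairRight ihM U) ≫ x))) ∧
    -- (b) `ζ` is a bijection onto the `A`-module morphisms
    (∀ φ : U ⟶ ihV.obj, IsRightModuleHom ihM q (ihM.rAct ihV) φ →
      ∃! x : coequalizer (tensorPairLeft ihM U q) (tensorPairRight ihM U) ⟶ V,
        ihV.η U (coequalizer.π (tensorPairLeft ihM U q) (tensorPairRight ihM U) ≫ x) = φ) ∧
    -- (c) naturality in `V`
    (∀ (V' : M) (ihV' : IHom Φ m V') (v : V ⟶ V')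
        (x : coequalizer (tensorPairLeft ihM U q) (tensorPairRight ihM U) ⟶ V),
      ihV'.η U (coequalizer.π (tensorPairLeft ihM U q) (tensorPairRight ihM U) ≫ x ≫ v)
        = ihV.η U (coequalizer.π (tensorPairLeft ihM U q) (tensorPairRight ihM U) ≫ x) ≫
            ihV'.η ihV.obj (ihV.ev ≫ v)) ∧
    -- (d) naturality in `U`
    (∀ (U' : C) (q' : U' ⊗ ihM.obj ⟶ U'), IsRightModule ihM U' q' →
      ∀ ψ : U' ⟶ U, IsRightModuleHom ihM q' q ψ →
      ∀ w : coequalizer (tensorPairLeft ihM U' q') (tensorPairRight ihM U') ⟶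
          coequalizer (tensorPairLeft ihM U q) (tensorPairRight ihM U),
        (Φ.act.map ψ).app m ≫ coequalizer.π (tensorPairLeft ihM U q) (tensorPairRight ihM U)
          = coequalizer.π (tensorPairLeft ihM U' q') (tensorPairRight ihM U') ≫ w →
        ∀ x : coequalizer (tensorPairLeft ihM U q) (tensorPairRight ihM U) ⟶ V,
          ihV.η U' (coequalizer.π (tensorPairLeft ihM U' q') (tensorPairRight ihM U') ≫ w ≫ x)
            = ψ ≫ ihV.η U (coequalizer.π (tensorPairLeft ihM U q) (tensorPairRight ihM U) ≫ x)) := by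
  -- key computation lemma: `η` and `ev` determine each other
  have hev : ∀ {V' : M} (ihV' : IHom Φ m V') (X : C) (g : (Φ.act.obj X).obj m ⟶ V'),
      (Φ.act.map (ihV'.η X g)).app m ≫ ihV'.ev = g := by
    intro V' ihV' X g
    apply (ihV'.η X).injective
    rw [ihV'.naturality]
    simp [IHom.ev]
  set π := coequalizer.π (tensorPairLeft ihM U q) (tensorPairRight ihM U) with hπ
  refine ⟨?_, ?_, ?_, ?_⟩
  · -- (a)
    intro x
    set ζ : U ⟶ ihV.obj := ihV.η U (π ≫ x) with hζ
    unfold IsRightModuleHom IHom.rAct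
    rw [← ihV.naturality, ← ihV.naturality]
    congr 1
    have e1 : tensorPairLeft ihM U q ≫ π = tensorPairRight ihM U ≫ π :=
      coequalizer.condition _ _
    have e2 := Φ.assoc_natural_left ζ ihM.obj m
    have e3 := (Φ.act.map ζ).naturality ihM.ev
    have e4 : (Φ.act.map ζ).app m ≫ ihV.ev = π ≫ x := hev ihV U (π ≫ x)
    calc (Φ.act.map q).app m ≫ π ≫ x
        = (tensorPairLeft ihM U q ≫ π) ≫ x := by
          simp [tensorPairLeft]
          exact (Category.assoc _ _ _).symm
      _ = (tensorPairRight ihM U ≫ π) ≫ x := by rw [e1]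
      _ = (Φ.assocIso U ihM.obj m).hom ≫ (Φ.act.obj U).map ihM.ev ≫
            ((Φ.act.map ζ).app m ≫ ihV.ev) := by
          rw [e4]; simp [tensorPairRight]
          exact (Category.assoc _ _ _).trans (Category.assoc _ _ _)
      _ = (Φ.assocIso U ihM.obj m).hom ≫
            ((Φ.act.obj U).map ihM.ev ≫ (Φ.act.map ζ).app m) ≫ ihV.ev := by
          simp
      _ = (Φ.assocIso U ihM.obj m).hom ≫
            ((Φ.act.map ζ).app ((Φ.act.obj ihM.obj).obj m) ≫
              (Φ.act.obj ihV.obj).map ihM.ev) ≫ ihV.ev := by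
          rw [e3]
      _ = ((Φ.assocIso U ihM.obj m).hom ≫
            (Φ.act.map ζ).app ((Φ.act.obj ihM.obj).obj m)) ≫
              (Φ.act.obj ihV.obj).map ihM.ev ≫ ihV.ev := by
          simp
      _ = (Φ.act.map (ζ ▷ ihM.obj)).app m ≫ (Φ.assocIso ihV.obj ihM.obj m).hom ≫
            (Φ.act.obj ihV.obj).map ihM.ev ≫ ihV.ev := by
          rw [← e2]; simp
  · -- (b)
    intro φ hφ
    set g : (Φ.act.obj U).obj m ⟶ V := (Φ.act.map φ).app m ≫ ihV.ev with hg
    have hcoeq : tensorPairLeft ihM U q ≫ g = tensorPairRight ihM U ≫ g := by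
      have e2 := Φ.assoc_natural_left φ ihM.obj m
      have e3 := (Φ.act.map φ).naturality ihM.ev
      have e5 : (Φ.act.map (ihM.rAct ihV)).app m ≫ ihV.ev =
          (Φ.assocIso ihV.obj ihM.obj m).hom ≫ (Φ.act.obj ihV.obj).map ihM.ev ≫ ihV.ev :=
        hev ihV _ _
      calc tensorPairLeft ihM U q ≫ g
          = (Φ.act.map (q ≫ φ)).app m ≫ ihV.ev := by
            simp [tensorPairLeft, hg]
        _ = (Φ.act.map ((φ ▷ ihM.obj) ≫ ihM.rAct ihV)).app m ≫ ihV.ev := by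
            rw [hφ]
        _ = (Φ.act.map (φ ▷ ihM.obj)).app m ≫
              ((Φ.act.map (ihM.rAct ihV)).app m ≫ ihV.ev) := by simp
        _ = (Φ.act.map (φ ▷ ihM.obj)).app m ≫ (Φ.assocIso ihV.obj ihM.obj m).hom ≫
              (Φ.act.obj ihV.obj).map ihM.ev ≫ ihV.ev := by rw [e5]
        _ = ((Φ.act.map (φ ▷ ihM.obj)).app m ≫ (Φ.assocIso ihV.obj ihM.obj m).hom) ≫
              (Φ.act.obj ihV.obj).map ihM.ev ≫ ihV.ev := by simp
        _ = (Φ.assocIso U ihM.obj m).hom ≫ (Φ.act.map φ).app ((Φ.act.obj ihM.obj).obj m) ≫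
              (Φ.act.obj ihV.obj).map ihM.ev ≫ ihV.ev := by rw [e2]; simp
        _ = (Φ.assocIso U ihM.obj m).hom ≫
              ((Φ.act.map φ).app ((Φ.act.obj ihM.obj).obj m) ≫
                (Φ.act.obj ihV.obj).map ihM.ev) ≫ ihV.ev := by simp
        _ = (Φ.assocIso U ihM.obj m).hom ≫
              ((Φ.act.obj U).map ihM.ev ≫ (Φ.act.map φ).app m) ≫ ihV.ev := by rw [← e3]
        _ = tensorPairRight ihM U ≫ g := by simp [tensorPairRight, hg]
    refine ⟨coequalizer.desc g hcoeq, ?_, ?_⟩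
    · show (ihV.η U) (π ≫ coequalizer.desc g hcoeq) = φ
      rw [show π ≫ coequalizer.desc g hcoeq = g from by rw [hπ]; exact coequalizer.π_desc _ _]
      rw [hg, ihV.naturality]
      simp [IHom.ev]
    · intro y hy
      have hinj : π ≫ y = π ≫ coequalizer.desc g hcoeq := by
        apply (ihV.η U).injective
        rw [hy]
        rw [show π ≫ coequalizer.desc g hcoeq = g from by rw [hπ]; exact coequalizer.π_desc _ _]
        rw [hg, ihV.naturality]
        simp [IHom.ev]
      rw [hπ] at hinj
      exact (cancel_epi (coequalizer.π _ _)).mp hinj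
  · -- (c)
    intro V' ihV' v x
    have h := hev ihV U (π ≫ x)
    have h' : π ≫ x ≫ v = (Φ.act.map (ihV.η U (π ≫ x))).app m ≫ (ihV.ev ≫ v) := by
      conv_lhs => rw [← Category.assoc, ← h, Category.assoc]
    rw [h', ihV'.naturality]
  · -- (d)
    intro U' q' _ ψ _ w hw x
    have h' : coequalizer.π (tensorPairLeft ihM U' q') (tensorPairRight ihM U') ≫ w ≫ x
        = (Φ.act.map ψ).app m ≫ (π ≫ x) := by
      rw [← Category.assoc, ← hw, Category.assoc]
    rw [h', ihV.naturality]
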